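/- Deterministic bound for Phocas relative to the trimmed mean: Let m, q, b be integers with 0 ≤ q ≤ b ≤ ⌈m/2⌉ − 1. Let ṽ_1, …, ṽ_m be real numbers whose multiset contains the multiset of correct values {v_1, …, v_{m−q}} as a sub-multiset, let T = Trmean_b(ṽ_1,…,ṽ_m), and let g be any real number. Then (Phocas_b(ṽ_1,…,ṽ_m) − T)² ≤ (2/(m−q)) Σ_{i=1}^{m−q} (v_i − g)² + 2(g − T)². -/

import Mathlib

/-- The `k`-th smallest element (1-indexed order statistic) of `u 1, …, u m`. -/
noncomputable def orderStat {m : ℕ} (u : Fin m → ℝ) (k : ℕ) : ℝ :=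
  ((Multiset.map u Finset.univ.val).sort (· ≤ ·)).getD (k - 1) 0

/-- The `b`-trimmed mean of `u 1, …, u m`:
`(1/(m-2b)) ∑_{k=b+1}^{m-b} u_{k:m}`. -/
noncomputable def trmean {m : ℕ} (b : ℕ) (u : Fin m → ℝ) : ℝ :=
  (∑ k ∈ Finset.Icc (b + 1) (m - b), orderStat u k) / ((m : ℝ) - 2 * b)

/-- The list `l` sorted by (nondecreasing) distance to `y`
(a fixed, consistent tie-breaking rule given by a stable merge sort). -/
noncomputable def sortByDist (y : ℝ) (l : List ℝ) : List ℝ :=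
  l.mergeSort (fun a b => decide (|a - y| ≤ |b - y|))

/-- `nearest y u k` is the `k`-th closest element to `y` (1-indexed) among
`u 1, …, u m`, ties broken by a fixed consistent rule. -/
noncomputable def nearest (y : ℝ) {m : ℕ} (u : Fin m → ℝ) (k : ℕ) : ℝ :=
  (sortByDist y (List.ofFn u)).getD (k - 1) 0

/-- Phocas: the average of the `m - b` elements of `u 1, …, u m` nearest to the
`b`-trimmed mean. -/
noncomputable def phocas {m : ℕ} (b : ℕ) (u : Fin m → ℝ) : ℝ :=
  (∑ k ∈ Finset.Icc 1 (m - b), nearest (trmean b u) u k) / ((m : ℝ) - b)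


private lemma getD_mono_of_sorted {l : List ℝ} (h : l.Pairwise (· ≤ ·)) {i j : ℕ}
    (hij : i ≤ j) (hj : j < l.length) : l.getD i 0 ≤ l.getD j 0 := by
  rw [List.getD_eq_getElem _ _ (lt_of_le_of_lt hij hj), List.getD_eq_getElem _ _ hj]
  exact h.rel_get_of_le (a := ⟨i, lt_of_le_of_lt hij hj⟩) (b := ⟨j, hj⟩) hij

private lemma getD_le_of_sublist : ∀ {l₁ l₂ : List ℝ}, l₁.Sublist l₂ → l₂.Pairwise (· ≤ ·) →
    ∀ i, i < l₁.length → l₂.getD i 0 ≤ l₁.getD i 0 := by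
  intro l₁ l₂ h
  induction h with
  | slnil => intro _ i hi; simp at hi
  | @cons l₁ l₂ a h ih =>
    intro hs i hi
    have hlen : l₁.length ≤ l₂.length := h.length_le
    have h1 : (a :: l₂).getD i 0 ≤ (a :: l₂).getD (i + 1) 0 :=
      getD_mono_of_sorted hs (Nat.le_succ i)
        (by simpa using Nat.succ_le_of_lt (lt_of_lt_of_le hi hlen))
    have h2 : (a :: l₂).getD (i + 1) 0 = l₂.getD i 0 := rfl
    exact h1.trans (h2 ▸ ih (List.Pairwise.of_cons hs) i hi)
  | @cons_cons l₁ l₂ a h ih =>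
    intro hs i hi
    cases i with
    | zero => simp
    | succ j =>
      have := ih (List.Pairwise.of_cons hs) j (by simpa using hi)
      simpa using this

private lemma sum_range_le_mul (w : ℕ → ℝ) (p n : ℕ) (hpn : p ≤ n)
    (hw : ∀ i j, i ≤ j → j < n → w i ≤ w j) :
    (n : ℝ) * ∑ k ∈ Finset.range p, w k ≤ (p : ℝ) * ∑ k ∈ Finset.range n, w k := by
  have key : ((n - p : ℕ) : ℝ) * ∑ k ∈ Finset.range p, w k
      ≤ (p : ℝ) * ∑ j ∈ Finset.Ico p n, w j := by
    have h1 : ∑ j ∈ Finset.Ico p n, ∑ k ∈ Finset.range p, w k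
        ≤ ∑ j ∈ Finset.Ico p n, ∑ _k ∈ Finset.range p, w j := by
      refine Finset.sum_le_sum fun j hj => Finset.sum_le_sum fun k hk => ?_
      rw [Finset.mem_Ico] at hj
      rw [Finset.mem_range] at hk
      exact hw k j (le_of_lt (lt_of_lt_of_le hk hj.1)) hj.2
    simpa [Finset.sum_const, Nat.card_Ico, Finset.card_range, nsmul_eq_mul,
      Finset.mul_sum] using h1
  have hsplit : ∑ k ∈ Finset.range p, w k + ∑ j ∈ Finset.Ico p n, w j
      = ∑ k ∈ Finset.range n, w k := by
    rw [Finset.range_eq_Ico, Finset.range_eq_Ico]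
    exact Finset.sum_Ico_consecutive (f := w) (Nat.zero_le p) hpn
  have hc : ((n - p : ℕ) : ℝ) = (n : ℝ) - p := by
    push_cast [Nat.cast_sub hpn]; ring
  rw [hc] at key
  nlinarith [key, hsplit]

private lemma sum_range_getD_eq_sum (l : List ℝ) :
    ∑ k ∈ Finset.range l.length, l.getD k 0 = l.sum := by
  induction l with
  | nil => simp
  | cons a t ih =>
    rw [List.length_cons, Finset.sum_range_succ']
    simp only [List.getD_cons_succ, List.getD_cons_zero, List.sum_cons, ih]
    ring
theorem phocas_sub_trmean_sq_bound (m q b : ℕ) (hqb : q ≤ b)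
    (hb : b ≤ (m + 1) / 2 - 1)
    (vt : Fin m → ℝ) (v : Fin (m - q) → ℝ)
    (hS : ∃ S : Finset (Fin m), S.card = m - q ∧
      Multiset.map v Finset.univ.val = Multiset.map vt S.val)
    (g : ℝ) :
    (phocas b vt - trmean b vt) ^ 2 ≤
      2 / ((m : ℝ) - q) * ∑ i, (v i - g) ^ 2 + 2 * (g - trmean b vt) ^ 2 := by
  obtain ⟨S, hScard, hSeq⟩ := hS
  rcases Nat.eq_zero_or_pos m with hm | hm
  · have hb0 : b = 0 := by omega
    have hq0 : q = 0 := by omega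
    subst hm hb0 hq0
    simp only [phocas, trmean, Nat.zero_sub, Finset.Icc_self]
    norm_num
    positivity
  have hbm : b < m := by omega
  have hqm : q < m := by omega
  set T := trmean b vt with hT
  set L := sortByDist T (List.ofFn vt) with hL
  have hperm : L.Perm (List.ofFn vt) := List.mergeSort_perm _ _
  have hlen : L.length = m := by rw [hperm.length_eq, List.length_ofFn]
  have hLsorted : L.Pairwise (fun a b => |a - T| ≤ |b - T|) := by
    have := List.pairwise_mergeSort (le := fun a b : ℝ => decide (|a - T| ≤ |b - T|))
      (fun a b c h1 h2 => by
        simp only [decide_eq_true_eq] at *; linarith)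
      (fun a b => by simpa using le_total |a - T| |b - T|) (List.ofFn vt)
    simpa [hL, sortByDist, List.Pairwise, decide_eq_true_eq] using this
  set p := m - b with hpdef
  have hp : 0 < p := by omega
  have hpn : p ≤ m - q := by omega
  have hPpos : (0 : ℝ) < p := by exact_mod_cast hp
  have hNpos : (0 : ℝ) < (m - q : ℕ) := by
    have : 0 < m - q := by omega
    exact_mod_cast this
  set f : ℝ → ℝ := fun x => (x - T) ^ 2 with hf
  set D := L.map f with hD
  have hDlen : D.length = m := by rw [hD, List.length_map, hlen]
  have hDsorted : D.Pairwise (· ≤ ·) := by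
    refine hLsorted.map f fun a b hab => ?_
    simpa [hf, sq_abs] using pow_le_pow_left₀ (abs_nonneg (a - T)) hab 2
  set W := (Multiset.map f (Multiset.map v Finset.univ.val)).sort (· ≤ ·) with hW
  have hWsorted : W.Pairwise (· ≤ ·) := Multiset.pairwise_sort _ _
  have hWlen : W.length = m - q := by
    rw [hW, Multiset.length_sort, Multiset.card_map, Multiset.card_map]
    simp
  -- W is a sublist of D
  have hmle : (W : Multiset ℝ) ≤ (D : Multiset ℝ) := by
    rw [hW, Multiset.sort_eq]
    have h1 : Multiset.map v Finset.univ.val ≤ (List.ofFn vt : Multiset ℝ) := by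
      rw [hSeq]
      have hofn : (List.ofFn vt : Multiset ℝ) = Multiset.map vt Finset.univ.val := by
        have h0 : (Finset.univ.val : Multiset (Fin m)) = ↑(List.finRange m) := rfl
        rw [h0, Multiset.map_coe, ← List.ofFn_eq_map]
      rw [hofn]
      exact Multiset.map_le_map (Finset.val_le_iff.mpr (Finset.subset_univ S))
    have h2 : (List.ofFn vt : Multiset ℝ) = (L : Multiset ℝ) := Quot.sound hperm.symm
    rw [h2] at h1
    have h3 : Multiset.map f (L : Multiset ℝ) = (D : Multiset ℝ) := rfl
    calc Multiset.map f (Multiset.map v Finset.univ.val)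
        ≤ Multiset.map f (L : Multiset ℝ) := Multiset.map_le_map h1
      _ = (D : Multiset ℝ) := h3
  obtain ⟨W', hW'perm, hW'sub⟩ := Multiset.coe_le.mp hmle
  have hW'sorted : W'.Pairwise (· ≤ ·) := hDsorted.sublist hW'sub
  have hWeq : W' = W := List.Perm.eq_of_pairwise' hW'sorted hWsorted hW'perm
  have hWD : W.Sublist D := hWeq ▸ hW'sub
  -- phocas as a sum over range p
  have hphocas : phocas b vt = (∑ k ∈ Finset.range p, L.getD k 0) / ((m : ℝ) - b) := by
    rw [phocas]
    congr 1
    rw [← Finset.Ico_add_one_right_eq_Icc, Finset.sum_Ico_eq_sum_range]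
    refine Finset.sum_congr rfl fun k _ => ?_
    simp [nearest, ← hT, ← hL, Nat.add_sub_cancel_left]
  have hcast : (m : ℝ) - b = (p : ℝ) := by
    rw [hpdef]; push_cast [Nat.cast_sub hbm.le]; ring
  have hdiff : phocas b vt - T = (∑ k ∈ Finset.range p, (L.getD k 0 - T)) / (p : ℝ) := by
    rw [hphocas, hcast, Finset.sum_sub_distrib, Finset.sum_const, Finset.card_range,
      nsmul_eq_mul]
    field_simp
  -- Cauchy-Schwarz
  have hCS : (phocas b vt - T) ^ 2 ≤ (∑ k ∈ Finset.range p, (L.getD k 0 - T) ^ 2) / (p : ℝ) := by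
    rw [hdiff, div_pow]
    rw [div_le_div_iff₀ (by positivity) hPpos]
    have := sq_sum_le_card_mul_sum_sq (s := Finset.range p) (f := fun k => L.getD k 0 - T)
    rw [Finset.card_range] at this
    nlinarith [this, hPpos]
  -- rewrite squared distances as D entries
  have hAD : ∑ k ∈ Finset.range p, (L.getD k 0 - T) ^ 2 = ∑ k ∈ Finset.range p, D.getD k 0 := by
    refine Finset.sum_congr rfl fun k hk => ?_
    rw [Finset.mem_range] at hk
    have hkm : k < m := lt_of_lt_of_le hk (by omega)
    rw [List.getD_eq_getElem L 0 (by omega : k < L.length),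
      List.getD_eq_getElem D 0 (by omega : k < D.length)]
    simp [hD, hf]
  -- smallest p of D bounded by smallest p of W
  have hDW : ∑ k ∈ Finset.range p, D.getD k 0 ≤ ∑ k ∈ Finset.range p, W.getD k 0 := by
    refine Finset.sum_le_sum fun k hk => ?_
    rw [Finset.mem_range] at hk
    exact getD_le_of_sublist hWD hDsorted k (by omega)
  -- average of first p of W ≤ average of all of W
  have hWavg : ((m - q : ℕ) : ℝ) * ∑ k ∈ Finset.range p, W.getD k 0
      ≤ (p : ℝ) * ∑ k ∈ Finset.range (m - q), W.getD k 0 := by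
    refine sum_range_le_mul _ p (m - q) hpn fun i j hij hj => ?_
    exact getD_mono_of_sorted hWsorted hij (by omega)
  -- total sum of W
  have hWsum : ∑ k ∈ Finset.range (m - q), W.getD k 0 = ∑ i, f (v i) := by
    conv_lhs => rw [← hWlen]
    rw [sum_range_getD_eq_sum]
    have h4 : (W : Multiset ℝ).sum = W.sum := rfl
    rw [← h4, hW, Multiset.sort_eq, Multiset.map_map, Finset.sum_eq_multiset_sum]
    rfl
  -- pointwise bound
  have hpt : ∑ i, f (v i) ≤ 2 * (∑ i, (v i - g) ^ 2) + ((m - q : ℕ) : ℝ) * (2 * (g - T) ^ 2) := by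
    have h1 : ∑ i, f (v i) ≤ ∑ i : Fin (m - q), (2 * (v i - g) ^ 2 + 2 * (g - T) ^ 2) := by
      refine Finset.sum_le_sum fun i _ => ?_
      simp only [hf]
      nlinarith [sq_nonneg (v i - g - (g - T)), sq_nonneg (v i - g + (g - T))]
    calc ∑ i, f (v i) ≤ _ := h1
      _ = 2 * (∑ i, (v i - g) ^ 2) + ((m - q : ℕ) : ℝ) * (2 * (g - T) ^ 2) := by
        rw [Finset.sum_add_distrib, Finset.sum_const, Finset.mul_sum, Finset.card_univ]
        simp [nsmul_eq_mul]
  -- assemble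
  have hmq : (m : ℝ) - q = ((m - q : ℕ) : ℝ) := by
    push_cast [Nat.cast_sub hqm.le]; ring
  rw [hmq]
  have step1 : (phocas b vt - T) ^ 2 ≤ (∑ k ∈ Finset.range p, W.getD k 0) / (p : ℝ) := by
    refine hCS.trans ?_
    rw [hAD]
    gcongr
  have step2 : (∑ k ∈ Finset.range p, W.getD k 0) / (p : ℝ)
      ≤ (∑ k ∈ Finset.range (m - q), W.getD k 0) / ((m - q : ℕ) : ℝ) := by
    rw [div_le_div_iff₀ hPpos hNpos]
    nlinarith [hWavg]
  have step3 : (∑ k ∈ Finset.range (m - q), W.getD k 0) / ((m - q : ℕ) : ℝ)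
      ≤ 2 / ((m - q : ℕ) : ℝ) * (∑ i, (v i - g) ^ 2) + 2 * (g - T) ^ 2 := by
    rw [hWsum, div_le_iff₀ hNpos]
    have h5 : (2 / ((m - q : ℕ) : ℝ) * (∑ i, (v i - g) ^ 2) + 2 * (g - T) ^ 2) * ((m - q : ℕ) : ℝ)
        = 2 * (∑ i, (v i - g) ^ 2) + ((m - q : ℕ) : ℝ) * (2 * (g - T) ^ 2) := by
      field_simp
    rw [h5]
    exact hpt
  exact step1.trans (step2.trans step3)
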